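/- Let f : ℝ^d → ℝ be differentiable, let x, x* ∈ ℝ^d, γ > 0, ω ∈ (0,1), σ ∈ ℝ, and let H : Ω → ℝ^d be measurable with E[‖H‖²] < ∞ and E[H] = ∇f(x). If E[‖(x - γ·H) - x*‖²] ≤ ω‖x - x*‖² + γ²σ², then E[‖H‖²] ≤ (1/(1-ω))‖∇f(x)‖² + σ². (One-step form of Theorem 1(ii): when g is constant, the stochastic gradient mapping equals the stochastic gradient ∇K(x_t, ξ_t), and the conclusion is the weak growth condition.) -/

import Mathlib

open MeasureTheory

/-- One-step form of Theorem 1(ii): when `g` is constant the stochastic gradient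
mapping equals the stochastic gradient itself, and the contraction property
implies the weak growth condition. -/
theorem stmt_1 {d : ℕ} {Ω : Type*} [MeasurableSpace Ω] (P : Measure Ω)
    [IsProbabilityMeasure P]
    (f : EuclideanSpace ℝ (Fin d) → ℝ) (hfdiff : Differentiable ℝ f)
    (x xstar : EuclideanSpace ℝ (Fin d))
    (γ ω σ : ℝ) (hγ : 0 < γ) (hω : ω ∈ Set.Ioo (0 : ℝ) 1)
    (H : Ω → EuclideanSpace ℝ (Fin d)) (hHmeas : Measurable H)
    (hHint : Integrable H P)
    (hHL2 : Integrable (fun a => ‖H a‖ ^ 2) P)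
    (hunbiased : ∫ a, H a ∂P = gradient f x)
    (hstep : ∫ a, ‖x - γ • H a - xstar‖ ^ 2 ∂P ≤ ω * ‖x - xstar‖ ^ 2 + γ ^ 2 * σ ^ 2) :
    ∫ a, ‖H a‖ ^ 2 ∂P ≤ (1 / (1 - ω)) * ‖gradient f x‖ ^ 2 + σ ^ 2 := by
  obtain ⟨hω0, hω1⟩ := hω
  set u := x - xstar with hu
  set g := gradient f x with hg
  have hinner : Integrable (fun a => (inner ℝ u (H a) : ℝ)) P :=
    (innerSL ℝ u).integrable_comp hHint
  have hexp : ∀ a, ‖x - γ • H a - xstar‖ ^ 2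
      = ‖u‖ ^ 2 - 2 * γ * (inner ℝ u (H a) : ℝ) + γ ^ 2 * ‖H a‖ ^ 2 := by
    intro a
    have h1 : x - γ • H a - xstar = u - γ • H a := by
      rw [hu]; abel
    rw [h1, norm_sub_sq_real, real_inner_smul_right, norm_smul]
    have : ‖γ‖ = γ := abs_of_pos hγ
    rw [this]; ring
  have hI : ∫ a, ‖x - γ • H a - xstar‖ ^ 2 ∂P
      = ‖u‖ ^ 2 - 2 * γ * (inner ℝ u g : ℝ) + γ ^ 2 * ∫ a, ‖H a‖ ^ 2 ∂P := by
    have hinteq : ∫ a, (inner ℝ u (H a) : ℝ) ∂P = (inner ℝ u g : ℝ) := by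
      have := (innerSL ℝ u).integral_comp_comm hHint
      simpa [hunbiased] using this
    calc ∫ a, ‖x - γ • H a - xstar‖ ^ 2 ∂P
        = ∫ a, (‖u‖ ^ 2 - 2 * γ * (inner ℝ u (H a) : ℝ) + γ ^ 2 * ‖H a‖ ^ 2) ∂P := by
          exact integral_congr_ae (Filter.Eventually.of_forall fun a => hexp a)
      _ = ∫ a, (‖u‖ ^ 2 - 2 * γ * (inner ℝ u (H a) : ℝ)) ∂P
          + ∫ a, γ ^ 2 * ‖H a‖ ^ 2 ∂P := by
          exact integral_add
            ((integrable_const _).sub (hinner.const_mul _)) (hHL2.const_mul _)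
      _ = (‖u‖ ^ 2 - 2 * γ * (inner ℝ u g : ℝ)) + γ ^ 2 * ∫ a, ‖H a‖ ^ 2 ∂P := by
          rw [integral_sub (integrable_const _) (hinner.const_mul _),
            integral_const, integral_const_mul, integral_const_mul, hinteq]
          simp
      _ = ‖u‖ ^ 2 - 2 * γ * (inner ℝ u g : ℝ) + γ ^ 2 * ∫ a, ‖H a‖ ^ 2 ∂P := by ring
  rw [hI] at hstep
  -- AM-GM : 2 γ (1-ω) ⟪u,g⟫ ≤ (1-ω)² ‖u‖² + γ² ‖g‖²
  have hamgm : 0 ≤ ‖(1 - ω) • u - γ • g‖ ^ 2 := sq_nonneg _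
  rw [norm_sub_sq_real, real_inner_smul_left, real_inner_smul_right,
    norm_smul, norm_smul] at hamgm
  have h1ω : ‖(1 : ℝ) - ω‖ = 1 - ω := abs_of_pos (by linarith)
  have hγn : ‖γ‖ = γ := abs_of_pos hγ
  rw [h1ω, hγn] at hamgm
  have hA : 0 ≤ ∫ a, ‖H a‖ ^ 2 ∂P :=
    integral_nonneg fun a => sq_nonneg _
  have hγ2 : 0 < γ ^ 2 := by positivity
  have h1ω' : 0 < 1 - ω := by linarith
  have key : (1 - ω) * ∫ a, ‖H a‖ ^ 2 ∂P ≤ ‖g‖ ^ 2 + (1 - ω) * σ ^ 2 := by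
    have hmul := mul_le_mul_of_nonneg_left hstep h1ω'.le
    nlinarith [hmul, hamgm]
  calc ∫ a, ‖H a‖ ^ 2 ∂P
      = ((1 - ω) * ∫ a, ‖H a‖ ^ 2 ∂P) / (1 - ω) := by field_simp
    _ ≤ (‖g‖ ^ 2 + (1 - ω) * σ ^ 2) / (1 - ω) :=
        (div_le_div_iff_of_pos_right h1ω').mpr key
    _ = 1 / (1 - ω) * ‖g‖ ^ 2 + σ ^ 2 := by field_simp
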